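/- For every ε ∈ ℂ, C(ε) is a Lie subalgebra of ⨁_{b∈ℤ/nℤ} gl_n(ℂ), and its dimension as a complex vector space is n². -/

import Mathlib

/-- The diagonal matrix `D_b(ε)` over `ℂ` whose `(b+1,b+1)` entry (1-based), i.e. `(b,b)`
entry (0-based), is `ε` and whose other diagonal entries are `1`. -/
def Dmat (n : ℕ) (ε : ℂ) (b : Fin n) : Matrix (Fin n) (Fin n) ℂ :=
  Matrix.diagonal (fun i => if i = b then ε else 1)

/-- `C(ε)`: tuples `(A_b)_{b ∈ ℤ/nℤ}` of complex `n×n` matrices with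
`A_{b+1} D_b(ε) = D_b(ε) A_b` for all `b`. -/
def Cset (n : ℕ) [NeZero n] (ε : ℂ) : Set (Fin n → Matrix (Fin n) (Fin n) ℂ) :=
  {A | ∀ b : Fin n, A (b + 1) * Dmat n ε b = Dmat n ε b * A b}

namespace Statement7Aux

/-- Exponent: 1 if `i` lies in the cyclic interval `[j+1, b)`, else 0. -/
def Eexp (n : ℕ) [NeZero n] (i j b : Fin n) : ℕ :=
  if (if (j+1).val ≤ b.val then ((j+1).val ≤ i.val ∧ i.val < b.val)
      else ((j+1).val ≤ i.val ∨ i.val < b.val)) then 1 else 0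

variable (n : ℕ) [NeZero n]

lemma val_add_one (hn : 2 ≤ n) (b : Fin n) :
    ((b+1 : Fin n)).val = if b.val + 1 = n then 0 else b.val + 1 := by
  have hb := b.isLt
  rw [Fin.val_add, Fin.val_one', Nat.mod_eq_of_lt (show 1 < n by omega)]
  split_ifs with h
  · rw [h, Nat.mod_self]
  · exact Nat.mod_eq_of_lt (by omega)

lemma Eexp_base (i j : Fin n) : Eexp n i j (j+1) = 0 := by
  simp only [Eexp]
  split_ifs <;> omega

lemma Eexp_succ (hn : 2 ≤ n) (i j b : Fin n) :
    Eexp n i j (b+1) + (if j = b then 1 else 0)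
      = (if i = b then 1 else 0) + Eexp n i j b := by
  have hi := i.isLt; have hjv := j.isLt; have hbv := b.isLt
  have hB : (b.val + 1 = n ∧ ((b+1 : Fin n)).val = 0)
      ∨ (b.val + 1 < n ∧ ((b+1 : Fin n)).val = b.val + 1) := by
    rw [val_add_one n hn b]; split_ifs with h
    · exact Or.inl ⟨h, rfl⟩
    · exact Or.inr ⟨by omega, rfl⟩
  have hJ : (j.val + 1 = n ∧ ((j+1 : Fin n)).val = 0)
      ∨ (j.val + 1 < n ∧ ((j+1 : Fin n)).val = j.val + 1) := by
    rw [val_add_one n hn j]; split_ifs with h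
    · exact Or.inl ⟨h, rfl⟩
    · exact Or.inr ⟨by omega, rfl⟩
  simp only [Eexp, Fin.ext_iff]
  split_ifs <;> omega

def Phi (ε : ℂ) : Matrix (Fin n) (Fin n) ℂ →ₗ[ℂ] (Fin n → Matrix (Fin n) (Fin n) ℂ) where
  toFun M := fun b => Matrix.of fun i j => ε ^ Eexp n i j b * M i j
  map_add' M N := by
    funext b; ext i j
    simp [mul_add]
  map_smul' c M := by
    funext b; ext i j
    simp [Matrix.smul_apply, smul_eq_mul]
    ring

lemma if_pow (ε : ℂ) (p : Prop) [Decidable p] :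
    (if p then ε else 1) = ε ^ (if p then 1 else 0) := by
  split_ifs <;> simp

lemma phi_mem (hn : 2 ≤ n) (ε : ℂ) (M : Matrix (Fin n) (Fin n) ℂ) :
    Phi n ε M ∈ Cset n ε := by
  intro b
  ext i j
  simp only [Phi, LinearMap.coe_mk, AddHom.coe_mk, Dmat, Matrix.mul_diagonal,
    Matrix.diagonal_mul, Matrix.of_apply]
  rw [if_pow, if_pow, mul_right_comm, ← pow_add, Eexp_succ n hn i j b, pow_add]
  ring

open scoped Fin.NatCast Fin.CommRing in
lemma mem_eq (hn : 2 ≤ n) (ε : ℂ) (A : Fin n → Matrix (Fin n) (Fin n) ℂ)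
    (hA : A ∈ Cset n ε) (b i j : Fin n) :
    A b i j = ε ^ Eexp n i j b * A (j+1) i j := by
  have rel : ∀ c : Fin n,
      A (c+1) i j * (if j = c then ε else 1) = (if i = c then ε else 1) * A c i j := by
    intro c
    have h := hA c
    have h2 := congrFun (congrFun h i) j
    simpa [Dmat, Matrix.mul_diagonal, Matrix.diagonal_mul] using h2
  have key : ∀ k : ℕ, k < n →
      A (j+1+(k:Fin n)) i j = ε ^ Eexp n i j (j+1+(k:Fin n)) * A (j+1) i j := by
    intro k
    induction k with
    | zero => intro _; simp [Eexp_base]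
    | succ k ih =>
      intro hk
      have hk' : k < n := by omega
      set c : Fin n := j + 1 + (k:Fin n) with hc
      have hne : j ≠ c := by
        intro h
        have h0 : (1 + (k:Fin n) : Fin n) = 0 := by
          have h' : j + 0 = j + (1 + (k:Fin n)) := by nth_rewrite 1 [h]; rw [hc, add_zero, add_assoc]
          exact (add_left_cancel h').symm
        have hv : ((1 + (k:Fin n) : Fin n)).val = 0 := by rw [h0]; rfl
        rw [Fin.val_add, Fin.val_one', Fin.val_natCast,
          Nat.mod_eq_of_lt (show 1 < n by omega),
          Nat.mod_eq_of_lt (show k < n from hk'),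
          Nat.mod_eq_of_lt (show 1 + k < n by omega)] at hv
        omega
      have hstep := rel c
      rw [if_neg hne, mul_one] at hstep
      have hcast : ((k+1 : ℕ) : Fin n) = (k : Fin n) + 1 := by push_cast; ring
      have hcb : j + 1 + ((k+1:ℕ) : Fin n) = c + 1 := by rw [hcast, hc]; ring
      rw [hcb, hstep, ih hk']
      have hE := Eexp_succ n hn i j c
      rw [if_neg hne, add_zero] at hE
      rw [if_pow, ← mul_assoc, ← pow_add, hE]
  have hlt := (b - (j+1)).isLt
  have h1 : j + 1 + (((b - (j+1)).val : ℕ) : Fin n) = b := by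
    rw [Fin.cast_val_eq_self]; ring
  have := key (b - (j+1)).val hlt
  rwa [h1] at this

end Statement7Aux


open Statement7Aux in
/-- `C(ε)` is a Lie subalgebra of `⨁_{b ∈ ℤ/nℤ} gl_n(ℂ)` (with the
componentwise commutator bracket) of complex dimension `n²`. -/
theorem statement7 (n : ℕ) [NeZero n] (hn : 2 ≤ n) (ε : ℂ) :
    ∃ S : Submodule ℂ (Fin n → Matrix (Fin n) (Fin n) ℂ),
      (S : Set (Fin n → Matrix (Fin n) (Fin n) ℂ)) = Cset n ε ∧
      (∀ A ∈ S, ∀ B ∈ S, (fun b => A b * B b - B b * A b) ∈ S) ∧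
      Module.finrank ℂ S = n ^ 2 := by
  have hset : (LinearMap.range (Phi n ε) : Set (Fin n → Matrix (Fin n) (Fin n) ℂ)) = Cset n ε := by
    ext A
    constructor
    · rintro ⟨M, rfl⟩
      exact phi_mem n hn ε M
    · intro hA
      refine ⟨Matrix.of (fun i j => A (j+1) i j), ?_⟩
      funext b
      ext i j
      simp only [Phi, LinearMap.coe_mk, AddHom.coe_mk, Matrix.of_apply]
      exact (mem_eq n hn ε A hA b i j).symm
  refine ⟨LinearMap.range (Phi n ε), hset, ?_, ?_⟩
  · intro A hA B hB
    have hA' : A ∈ Cset n ε := by rw [← hset]; exact hA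
    have hB' : B ∈ Cset n ε := by rw [← hset]; exact hB
    have : (fun b => A b * B b - B b * A b) ∈ Cset n ε := by
      intro b
      have ha := hA' b
      have hb := hB' b
      simp only [sub_mul, mul_sub, mul_assoc, hb, ha]
      rw [← mul_assoc, ha, ← mul_assoc, hb]
      simp [mul_assoc]
    rw [← SetLike.mem_coe, hset]
    exact this
  · have hinj : Function.Injective (Phi n ε) := by
      intro M N h
      ext i j
      have h2 := congrFun (congrFun (congrFun h (j+1)) i) j
      simpa [Phi, Eexp_base] using h2
    rw [LinearMap.finrank_range_of_inj hinj, Module.finrank_matrix]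
    simp [pow_two]
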